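/- Let s>0, y_1>0, y_2>0 and let f: ℝ² → ℝ be a polynomial. Then as (a,b) → (0⁺, 2s), the integral ∫_0^1 u^{a-1}(1-u)^{b-1}[f(y_1 − y_1 u, y_2 + y_1 u) − f(y_1,y_2)] du converges to ∫_0^{y_1} α^{-1}(1-α/y_1)^{2s-1}[f(y_1-α, y_2+α) − f(y_1,y_2)] dα. -/

import Mathlib

open MeasureTheory Filter

noncomputable section

namespace HeatModel

set_option maxRecDepth 10000
set_option maxHeartbeats 1000000

/-- The rightward Levy bulk generator of the integrable heat conduction model arises as the
limit, for `(a,b) → (0⁺, 2s)`, of the (Beta-function normalized) Beta(a,b)-redistribution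
generator of the immediate exchange model, on polynomial functions. -/
theorem beta_redistribution_limit (s : ℝ) (hs : 0 < s) (y₁ y₂ : ℝ) (h₁ : 0 < y₁)
    (h₂ : 0 < y₂) (p : MvPolynomial (Fin 2) ℝ) :
    Filter.Tendsto
      (fun ab : ℝ × ℝ =>
        ∫ u in Set.Ioo (0 : ℝ) 1,
          u ^ (ab.1 - 1) * (1 - u) ^ (ab.2 - 1) *
            (MvPolynomial.eval ![y₁ - y₁ * u, y₂ + y₁ * u] p - MvPolynomial.eval ![y₁, y₂] p))
      ((nhdsWithin (0 : ℝ) (Set.Ioi 0)) ×ˢ (nhds (2 * s)))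
      (nhds
        (∫ a in Set.Ioo 0 y₁,
          a⁻¹ * (1 - a / y₁) ^ (2 * s - 1) *
            (MvPolynomial.eval ![y₁ - a, y₂ + a] p - MvPolynomial.eval ![y₁, y₂] p))) := by
  have hy₁ : (y₁ : ℝ) ≠ 0 := ne_of_gt h₁
  set K : ℝ := MvPolynomial.eval ![y₁, y₂] p with hK
  -- the one-variable polynomial u ↦ f(y₁ - y₁ u, y₂ + y₁ u) - f(y₁, y₂)
  set v : Fin 2 → Polynomial ℝ :=
    ![Polynomial.C y₁ - Polynomial.C y₁ * Polynomial.X,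
      Polynomial.C y₂ + Polynomial.C y₁ * Polynomial.X] with hv
  set q : Polynomial ℝ := MvPolynomial.eval₂ Polynomial.C v p - Polynomial.C K with hqdef
  have hq : ∀ u : ℝ,
      q.eval u = MvPolynomial.eval ![y₁ - y₁ * u, y₂ + y₁ * u] p - K := by
    intro u
    have h := MvPolynomial.eval₂_comp_left (Polynomial.evalRingHom u) Polynomial.C v p
    have hcomp : (Polynomial.evalRingHom u).comp (Polynomial.C : ℝ →+* Polynomial ℝ)
        = RingHom.id ℝ := by
      ext x; simp
    have hfun : ((Polynomial.evalRingHom u) ∘ v) = ![y₁ - y₁ * u, y₂ + y₁ * u] := by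
      funext i
      fin_cases i <;>
        simp [hv]
    rw [hcomp, hfun, MvPolynomial.eval₂_id] at h
    rw [hqdef, Polynomial.eval_sub, Polynomial.eval_C, ← Polynomial.coe_evalRingHom, h]
  have hq0 : q.eval 0 = 0 := by
    have h0 : (![y₁ - y₁ * 0, y₂ + y₁ * 0] : Fin 2 → ℝ) = ![y₁, y₂] := by
      funext i; fin_cases i <;> simp
    rw [hq 0, h0, hK, sub_self]
  -- factor out u
  obtain ⟨r, hr⟩ : Polynomial.X ∣ q := by
    rw [Polynomial.X_dvd_iff, Polynomial.coeff_zero_eq_eval_zero]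
    exact hq0
  have hq' : ∀ u : ℝ,
      MvPolynomial.eval ![y₁ - y₁ * u, y₂ + y₁ * u] p - K = u * r.eval u := by
    intro u
    rw [← hq u, hr]
    simp
  -- bound on r on [0,1]
  obtain ⟨C, hC⟩ : ∃ C, ∀ x ∈ Set.Icc (0:ℝ) 1, ‖r.eval x‖ ≤ C :=
    isCompact_Icc.exists_bound_of_continuousOn (Polynomial.continuous r).continuousOn
  -- exponent bound
  set ε : ℝ := min s 1 with hε
  have hε0 : 0 < ε := lt_min hs one_pos
  set c : ℝ := 2 * s - 1 - ε with hc
  have hc1 : -1 < c := by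
    have : ε ≤ s := min_le_left _ _
    simp only [hc]; linarith
  -- rewrite the target integral via the substitution a = y₁ u
  have htarget :
      (∫ a in Set.Ioo 0 y₁,
          a⁻¹ * (1 - a / y₁) ^ (2 * s - 1) *
            (MvPolynomial.eval ![y₁ - a, y₂ + a] p - K))
        = ∫ u in Set.Ioo (0:ℝ) 1,
            u ^ ((0:ℝ) - 1) * (1 - u) ^ (2 * s - 1) *
              (MvPolynomial.eval ![y₁ - y₁ * u, y₂ + y₁ * u] p - K) := by
    set F : ℝ → ℝ := fun a =>
      a⁻¹ * (1 - a / y₁) ^ (2 * s - 1) * (MvPolynomial.eval ![y₁ - a, y₂ + a] p - K) with hF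
    calc (∫ a in Set.Ioo 0 y₁, F a)
        = ∫ a in (0:ℝ)..y₁, F a := by
          rw [intervalIntegral.integral_of_le h₁.le, MeasureTheory.integral_Ioc_eq_integral_Ioo]
      _ = y₁ • ∫ u in (0:ℝ)..1, F (y₁ * u) := by
          rw [intervalIntegral.smul_integral_comp_mul_left F y₁, mul_zero, mul_one]
      _ = ∫ u in (0:ℝ)..1, y₁ • F (y₁ * u) := (intervalIntegral.integral_smul y₁ _).symm
      _ = ∫ u in Set.Ioo (0:ℝ) 1, y₁ • F (y₁ * u) := by
          rw [intervalIntegral.integral_of_le zero_le_one,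
            MeasureTheory.integral_Ioc_eq_integral_Ioo]
      _ = ∫ u in Set.Ioo (0:ℝ) 1,
            u ^ ((0:ℝ) - 1) * (1 - u) ^ (2 * s - 1) *
              (MvPolynomial.eval ![y₁ - y₁ * u, y₂ + y₁ * u] p - K) := by
          apply MeasureTheory.setIntegral_congr_fun measurableSet_Ioo
          intro u hu
          have hu0 : (0:ℝ) < u := hu.1
          have hdiv : 1 - y₁ * u / y₁ = 1 - u := by field_simp
          simp only [hF, smul_eq_mul, hdiv]
          rw [zero_sub, Real.rpow_neg_one, mul_inv]
          field_simp
  rw [hK] at htarget ⊢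
  rw [htarget]
  simp only [← hK, hq']
  -- dominated convergence
  apply MeasureTheory.tendsto_integral_filter_of_dominated_convergence
    (fun u => C * (1 - u) ^ c)
  · -- measurability
    apply Filter.Eventually.of_forall
    intro ab
    apply ContinuousOn.aestronglyMeasurable _ measurableSet_Ioo
    apply ContinuousOn.mul
    apply ContinuousOn.mul
    · exact continuousOn_id.rpow_const fun x hx => Or.inl (ne_of_gt hx.1)
    · exact (continuousOn_const.sub continuousOn_id).rpow_const
        fun x hx => Or.inl (sub_ne_zero.mpr (ne_of_gt hx.2))
    · exact (continuous_id.mul (Polynomial.continuous r)).continuousOn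
  · -- uniform bound
    have hmem : (Set.Ioo (0:ℝ) 1) ×ˢ (Set.Ioi (2 * s - ε)) ∈
        (nhdsWithin (0:ℝ) (Set.Ioi 0)) ×ˢ (nhds (2 * s)) :=
      Filter.prod_mem_prod (Ioo_mem_nhdsGT_of_mem ⟨le_refl 0, one_pos⟩)
        (Ioi_mem_nhds (by linarith))
    filter_upwards [hmem] with ab hab
    rw [MeasureTheory.ae_restrict_iff' measurableSet_Ioo]
    apply Filter.Eventually.of_forall
    intro u hu
    have hu0 : (0:ℝ) < u := hu.1
    have hu1 : u < 1 := hu.2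
    have h1u : (0:ℝ) < 1 - u := by linarith
    have ha0 : (0:ℝ) < ab.1 := hab.1.1
    have ha1 : ab.1 < 1 := hab.1.2
    have hb : 2 * s - ε < ab.2 := hab.2
    have e1 : u ^ (ab.1 - 1) * u = u ^ ab.1 := by
      rw [← Real.rpow_add_one (ne_of_gt hu0) (ab.1 - 1), sub_add_cancel]
    have hua : u ^ ab.1 ≤ 1 := Real.rpow_le_one hu0.le hu1.le ha0.le
    have hub : (1 - u) ^ (ab.2 - 1) ≤ (1 - u) ^ c :=
      Real.rpow_le_rpow_of_exponent_ge h1u (by linarith) (by simp only [hc]; linarith)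
    have hrC : |r.eval u| ≤ C := by
      have := hC u ⟨hu0.le, hu1.le⟩
      rwa [Real.norm_eq_abs] at this
    rw [Real.norm_eq_abs, abs_mul, abs_mul, abs_mul,
      abs_of_nonneg (Real.rpow_nonneg hu0.le _),
      abs_of_nonneg (Real.rpow_nonneg h1u.le _), abs_of_nonneg hu0.le]
    calc u ^ (ab.1 - 1) * (1 - u) ^ (ab.2 - 1) * (u * |r.eval u|)
        = (u ^ (ab.1 - 1) * u) * ((1 - u) ^ (ab.2 - 1) * |r.eval u|) := by ring
      _ = u ^ ab.1 * ((1 - u) ^ (ab.2 - 1) * |r.eval u|) := by rw [e1]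
      _ ≤ 1 * ((1 - u) ^ c * C) := by
          apply mul_le_mul hua
            (mul_le_mul hub hrC (abs_nonneg _) (Real.rpow_nonneg h1u.le _))
            (by positivity) zero_le_one
      _ = C * (1 - u) ^ c := by ring
  · -- integrability of the bound
    have hb1 : IntervalIntegrable (fun x : ℝ => x ^ c) volume 0 1 :=
      intervalIntegral.intervalIntegrable_rpow' hc1
    have hb2 : IntervalIntegrable (fun x : ℝ => (1 - x) ^ c) volume 0 1 := by
      have := hb1.comp_sub_left 1
      simpa using this.symm
    have hb3 : IntegrableOn (fun x : ℝ => (1 - x) ^ c) (Set.Ioo 0 1) volume := by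
      rw [intervalIntegrable_iff_integrableOn_Ioo_of_le zero_le_one] at hb2
      exact hb2
    exact hb3.const_mul C
  · -- pointwise convergence
    rw [MeasureTheory.ae_restrict_iff' measurableSet_Ioo]
    apply Filter.Eventually.of_forall
    intro u hu
    have hu0 : (0:ℝ) < u := hu.1
    have h1u : (0:ℝ) < 1 - u := by linarith [hu.2]
    have hl : (nhdsWithin (0:ℝ) (Set.Ioi 0)) ×ˢ (nhds (2 * s)) ≤ nhds ((0:ℝ), 2 * s) := by
      rw [nhds_prod_eq]
      exact Filter.prod_mono nhdsWithin_le_nhds le_rfl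
    have hcont : Continuous (fun ab : ℝ × ℝ =>
        u ^ (ab.1 - 1) * (1 - u) ^ (ab.2 - 1) * (u * r.eval u)) := by
      simp only [Real.rpow_def_of_pos hu0, Real.rpow_def_of_pos h1u]
      fun_prop
    exact (hcont.tendsto ((0:ℝ), 2 * s)).mono_left hl

end HeatModel
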